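/- Let l be a finite distributive lattice (with its induced complete-lattice structure) and Σ a finite alphabet (a finite type). For a function f : (ℕ → Σ) → l the following are equivalent: (1) f is the ω-language of some l-VBA over Σ; (2) for every a ∈ l, the a-cut {w : ℕ → Σ | a ≤ f(w)} is an ω-regular language over Σ; (3) there exist k ∈ ℕ, elements m : Fin k → l and ω-regular languages 𝓛 : Fin k → Set (ℕ → Σ) such that f(w) = ⨆_{i : Fin k, w ∈ 𝓛 i} m i for every w. -/

import Mathlib

open Set

set_option linter.unusedSectionVars false
set_option maxHeartbeats 1000000

/-- The ω-language of an `l`-valued Büchi automaton `(Q, δ, I, F)`. -/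
def vbaLang {l Q A : Type*} [CompleteLattice l]
    (δ : Q → A → Q → l) (I : Q → l) (F : Q → l) (w : ℕ → A) : l :=
  ⨆ q : ℕ → Q, ⨆ J : {J : Set ℕ // J.Infinite},
    I (q 0) ⊓ (⨅ i : ℕ, δ (q i) (w i) (q (i + 1))) ⊓ ⨅ j ∈ J.1, F (q j)

/-- A classical nondeterministic Büchi automaton `(Δ, Q0, Acc)` accepts the
infinite word `w`. -/
def buchiAccepts {Q A : Type*} (Δ : Set (Q × A × Q)) (Q0 Acc : Set Q)
    (w : ℕ → A) : Prop :=
  ∃ q : ℕ → Q, q 0 ∈ Q0 ∧ (∀ i : ℕ, (q i, w i, q (i + 1)) ∈ Δ) ∧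
    {j : ℕ | q j ∈ Acc}.Infinite

/-- A set of infinite words over `A` is ω-regular if it is the language of
some classical Büchi automaton with a finite state type. -/
def OmegaRegular {A : Type} (Lang : Set (ℕ → A)) : Prop :=
  ∃ (Q : Type) (_ : Fintype Q) (Δ : Set (Q × A × Q)) (Q0 Acc : Set Q),
    Lang = {w : ℕ → A | buchiAccepts Δ Q0 Acc w}

section LatticeHelpers

variable {l : Type} [CompleteLattice l] [Fintype l]

lemma myIrredPrime (hd : ∀ x y z : l, x ⊓ (y ⊔ z) = (x ⊓ y) ⊔ (x ⊓ z))
    {p : l} (hp : SupIrred p) : SupPrime p := by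
  refine ⟨hp.1, fun b c h => ?_⟩
  have h2 : (p ⊓ b) ⊔ (p ⊓ c) = p := by rw [← hd]; exact inf_eq_left.mpr h
  rcases hp.2 h2 with h1 | h1
  · exact Or.inl (h1.symm.trans_le inf_le_right)
  · exact Or.inr (h1.symm.trans_le inf_le_right)

lemma myDecomp (hd : ∀ x y z : l, x ⊓ (y ⊔ z) = (x ⊓ y) ⊔ (x ⊓ z)) (a : l) :
    a = sSup {p : l | SupPrime p ∧ p ≤ a} := by
  obtain ⟨s, hs, hirr⟩ := exists_supIrred_decomposition a
  refine le_antisymm ?_ (sSup_le fun p hp => hp.2)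
  conv_lhs => rw [← hs]
  refine Finset.sup_le fun b hb => le_sSup ⟨myIrredPrime hd (hirr hb), ?_⟩
  rw [← hs]; exact Finset.le_sup (f := id) hb

lemma myPrimeLeISup {ι : Sort*} {p : l} (hp : SupPrime p) (g : ι → l) :
    p ≤ iSup g ↔ ∃ i, p ≤ g i := by
  constructor
  · intro h
    have hfin : (Set.range g).Finite := Set.toFinite _
    have h2 : p ≤ hfin.toFinset.sup id := by
      rw [Finset.sup_id_eq_sSup, Set.Finite.coe_toFinset, sSup_range]; exact h
    obtain ⟨b, hb, hpb⟩ := hp.le_finset_sup.mp h2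
    rw [Set.Finite.mem_toFinset] at hb
    obtain ⟨i, rfl⟩ := hb
    exact ⟨i, hpb⟩
  · rintro ⟨i, h⟩; exact h.trans (le_iSup g i)

end LatticeHelpers

section BuchiHelpers

variable {A : Type}

lemma myInfiniteOfGe {S : Set ℕ} (h : ∀ t : ℕ, ∃ j, t ≤ j ∧ j ∈ S) : S.Infinite :=
  Set.infinite_of_forall_exists_gt fun a => by
    obtain ⟨j, hj, hjS⟩ := h (a + 1); exact ⟨j, hjS, by omega⟩

lemma myOmegaRegularUniv : OmegaRegular (Set.univ : Set (ℕ → A)) := by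
  refine ⟨Unit, inferInstance, Set.univ, Set.univ, Set.univ, ?_⟩
  refine (Set.eq_univ_of_forall fun w => ?_).symm
  refine ⟨fun _ => (), trivial, fun _ => trivial, ?_⟩
  have : {j : ℕ | () ∈ (Set.univ : Set Unit)} = Set.univ := by ext; simp
  rw [this]; exact Set.infinite_univ

lemma myOmegaRegularInter {L1 L2 : Set (ℕ → A)} (h1 : OmegaRegular L1)
    (h2 : OmegaRegular L2) : OmegaRegular (L1 ∩ L2) := by
  classical
  obtain ⟨Q1, _, Δ1, Q01, Acc1, rfl⟩ := h1
  obtain ⟨Q2, _, Δ2, Q02, Acc2, rfl⟩ := h2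
  set upd : Q1 × Q2 × Bool → Bool := fun s =>
    if s.2.2 then (if s.2.1 ∈ Acc2 then false else true)
    else (if s.1 ∈ Acc1 then true else false) with hupd
  refine ⟨Q1 × Q2 × Bool, inferInstance,
    {x | (x.1.1, x.2.1, x.2.2.1) ∈ Δ1 ∧ (x.1.2.1, x.2.1, x.2.2.2.1) ∈ Δ2 ∧
      x.2.2.2.2 = upd x.1},
    {s | s.1 ∈ Q01 ∧ s.2.1 ∈ Q02 ∧ s.2.2 = false},
    {s | s.2.2 = true ∧ s.2.1 ∈ Acc2}, ?_⟩
  ext w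
  simp only [Set.mem_inter_iff, Set.mem_setOf_eq]
  constructor
  · rintro ⟨⟨q1, h01, ht1, hi1⟩, ⟨q2, h02, ht2, hi2⟩⟩
    set b : ℕ → Bool := fun n =>
      Nat.rec false (fun i bi => upd (q1 i, q2 i, bi)) n with hb
    have hbsucc : ∀ i, b (i + 1) = upd (q1 i, q2 i, b i) := fun i => rfl
    refine ⟨fun i => (q1 i, q2 i, b i), ⟨h01, h02, rfl⟩,
      fun i => ⟨ht1 i, ht2 i, rfl⟩, ?_⟩
    apply myInfiniteOfGe
    intro t
    have step1 : ∃ j, t ≤ j ∧ b j = true := by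
      by_cases hbt : b t = true
      · exact ⟨t, le_rfl, hbt⟩
      · obtain ⟨i, hiA, hti⟩ := hi1.exists_gt t
        by_cases hbi : b i = true
        · exact ⟨i, le_of_lt hti, hbi⟩
        · refine ⟨i + 1, by omega, ?_⟩
          rw [hbsucc i]
          simp only [hupd]
          rw [Bool.not_eq_true] at hbi
          have hiA' : q1 i ∈ Acc1 := hiA
          simp [hbi, hiA']
    obtain ⟨j, htj, hbj⟩ := step1
    have hex : ∃ i, j ≤ i ∧ q2 i ∈ Acc2 := by
      obtain ⟨i, hiA, hji⟩ := hi2.exists_gt j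
      exact ⟨i, le_of_lt hji, hiA⟩
    set i0 := Nat.find hex with hi0
    have hspec := Nat.find_spec hex
    have hmin : ∀ m, m < i0 → ¬(j ≤ m ∧ q2 m ∈ Acc2) := fun m hm => Nat.find_min hex hm
    have hstay : ∀ d, j + d ≤ i0 → b (j + d) = true := by
      intro d
      induction d with
      | zero => intro _; simpa using hbj
      | succ d ih =>
        intro hle
        have hd : j + d < i0 := by omega
        have hbd : b (j + d) = true := ih (by omega)
        have hnacc : q2 (j + d) ∉ Acc2 := fun hc => hmin _ hd ⟨by omega, hc⟩
        rw [show j + (d+1) = (j+d) + 1 by omega, hbsucc]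
        simp [hupd, hbd, hnacc]
    have hji0 : j ≤ i0 := hspec.1
    have hbi0 : b i0 = true := by
      have := hstay (i0 - j) (by omega)
      rwa [show j + (i0 - j) = i0 by omega] at this
    exact ⟨i0, by omega, hbi0, hspec.2⟩
  · rintro ⟨r, ⟨h01, h02, hb0⟩, ht, hinf⟩
    have htr1 : ∀ i, ((r i).1, w i, (r (i+1)).1) ∈ Δ1 := fun i => (ht i).1
    have htr2 : ∀ i, ((r i).2.1, w i, (r (i+1)).2.1) ∈ Δ2 := fun i => (ht i).2.1
    have hbs : ∀ i, (r (i+1)).2.2 = upd (r i) := fun i => (ht i).2.2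
    constructor
    · refine ⟨fun i => (r i).1, h01, htr1, ?_⟩
      by_contra hfin
      rw [Set.not_infinite] at hfin
      obtain ⟨N, hN⟩ := hfin.bddAbove
      have hnoacc : ∀ i, N < i → (r i).1 ∉ Acc1 := by
        intro i hi hc
        exact absurd (hN hc) (by omega)
      obtain ⟨j, hjA, hNj⟩ := hinf.exists_gt N
      have hfj : (r (j+1)).2.2 = false := by
        rw [hbs j]; simp [hupd, hjA.1, hjA.2]
      have hstay : ∀ d, (r (j+1+d)).2.2 = false := by
        intro d
        induction d with
        | zero => simpa using hfj
        | succ d ih =>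
          rw [show j+1+(d+1) = (j+1+d)+1 by omega, hbs]
          have : (r (j+1+d)).1 ∉ Acc1 := hnoacc _ (by omega)
          simp [hupd, ih, this]
      obtain ⟨j', hj'A, hjj'⟩ := hinf.exists_gt (j + 1)
      have := hstay (j' - (j+1))
      rw [show j+1+(j'-(j+1)) = j' by omega] at this
      rw [hj'A.1] at this
      exact absurd this (by simp)
    · exact ⟨fun i => (r i).2.1, h02, htr2, hinf.mono fun j hj => hj.2⟩

lemma myOmegaRegularBiInter {ι : Type*} (s : Finset ι) (L : ι → Set (ℕ → A))
    (h : ∀ i ∈ s, OmegaRegular (L i)) : OmegaRegular (⋂ i ∈ s, L i) := by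
  classical
  induction s using Finset.induction_on with
  | empty => simpa using myOmegaRegularUniv
  | insert a s hni ih =>
    rw [Finset.set_biInter_insert]
    exact myOmegaRegularInter (h a (Finset.mem_insert_self a s))
      (ih fun i hi => h i (Finset.mem_insert_of_mem hi))

end BuchiHelpers

section PrimeCut

variable {l : Type} [CompleteLattice l] [Fintype l] {A Q : Type}

lemma myPrimeCut {p : l} (hp : SupPrime p) (δ : Q → A → Q → l) (I F : Q → l) :
    {w : ℕ → A | p ≤ vbaLang δ I F w} =
      {w : ℕ → A | buchiAccepts {x : Q × A × Q | p ≤ δ x.1 x.2.1 x.2.2}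
        {q : Q | p ≤ I q} {q : Q | p ≤ F q} w} := by
  ext w
  simp only [Set.mem_setOf_eq, vbaLang, myPrimeLeISup hp, le_inf_iff, le_iInf_iff,
    buchiAccepts]
  constructor
  · rintro ⟨q, ⟨J, hJ⟩, ⟨⟨hI, hδ⟩, hF⟩⟩
    exact ⟨q, hI, hδ, hJ.mono fun j hj => hF j hj⟩
  · rintro ⟨q, hI, hδ, hinf⟩
    exact ⟨q, ⟨_, hinf⟩, ⟨⟨hI, hδ⟩, fun j hj => hj⟩⟩

end PrimeCut

section Rep

variable {l A : Type} [CompleteLattice l]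

/-- `g` is representable by an `l`-VBA. -/
def VbaRep (g : (ℕ → A) → l) : Prop :=
  ∃ (Q : Type) (_ : Fintype Q) (δ : Q → A → Q → l) (I F : Q → l),
    ∀ w : ℕ → A, g w = vbaLang δ I F w

lemma myVbaRepCongr {g g' : (ℕ → A) → l} (h : ∀ w, g w = g' w) (hg : VbaRep g) :
    VbaRep g' := by
  obtain ⟨Q, fQ, δ, I, F, hrep⟩ := hg
  exact ⟨Q, fQ, δ, I, F, fun w => (h w).symm.trans (hrep w)⟩

lemma myVbaRepBot : VbaRep (fun _ : ℕ → A => (⊥ : l)) := by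
  refine ⟨Empty, inferInstance, fun _ _ _ => ⊥, fun _ => ⊥, fun _ => ⊥, fun w => ?_⟩
  rw [vbaLang, iSup_of_empty]

/-- weighted ω-regular language as a VBA -/
lemma myVbaRepWeight {L : Set (ℕ → A)} (hL : OmegaRegular L) (m : l) :
    VbaRep (fun w => ⨆ _ : w ∈ L, m) := by
  classical
  obtain ⟨Q, fQ, Δ, Q0, Acc, rfl⟩ := hL
  refine ⟨Q, fQ, fun p a q => if (p, a, q) ∈ Δ then m else ⊥,
    fun q => if q ∈ Q0 then m else ⊥, fun q => if q ∈ Acc then m else ⊥, fun w => ?_⟩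
  apply le_antisymm
  · refine iSup_le fun hacc => ?_
    obtain ⟨q, h0, ht, hi⟩ := hacc
    refine le_trans ?_ (le_iSup₂_of_le q ⟨{j | q j ∈ Acc}, hi⟩ le_rfl)
    refine le_inf (le_inf ?_ ?_) ?_
    · simp only [if_pos h0]; exact le_rfl
    · exact le_iInf fun i => by simp only [if_pos (ht i)]; exact le_rfl
    · refine le_iInf₂ fun j hj => ?_
      have hj' : q j ∈ Acc := hj
      simp only [if_pos hj']; exact le_rfl
  · refine iSup₂_le fun q J => ?_
    by_cases h0 : q 0 ∈ Q0
    · by_cases ht : ∀ i : ℕ, (q i, w i, q (i + 1)) ∈ Δ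
      · by_cases hF : ∀ j ∈ J.1, q j ∈ Acc
        · have hacc : buchiAccepts Δ Q0 Acc w :=
            ⟨q, h0, ht, J.2.mono fun j hj => hF j hj⟩
          refine le_trans (inf_le_left.trans inf_le_left) ?_
          simp only [if_pos h0]
          exact le_iSup (fun _ : buchiAccepts Δ Q0 Acc w => m) hacc
        · push_neg at hF
          obtain ⟨j, hj, hjA⟩ := hF
          refine le_trans (inf_le_right.trans ?_) bot_le
          refine le_trans (iInf₂_le j hj) ?_
          simp only [if_neg hjA]; exact le_rfl
      · push_neg at ht
        obtain ⟨i, hi⟩ := ht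
        refine le_trans ((inf_le_left.trans inf_le_right).trans ?_) bot_le
        refine le_trans (iInf_le _ i) ?_
        simp only [if_neg hi]; exact le_rfl
    · refine le_trans ((inf_le_left.trans inf_le_left).trans ?_) bot_le
      simp only [if_neg h0]; exact le_rfl

/-- transition function of the disjoint-sum VBA -/
def mySumδ {Q1 Q2 : Type} (δ1 : Q1 → A → Q1 → l) (δ2 : Q2 → A → Q2 → l) :
    Q1 ⊕ Q2 → A → Q1 ⊕ Q2 → l
  | .inl p, a, .inl q => δ1 p a q
  | .inr p, a, .inr q => δ2 p a q
  | .inl _, _, .inr _ => ⊥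
  | .inr _, _, .inl _ => ⊥

@[simp] lemma mySumδ_ll {Q1 Q2 : Type} (δ1 : Q1 → A → Q1 → l) (δ2 : Q2 → A → Q2 → l)
    (p q : Q1) (a : A) : mySumδ δ1 δ2 (.inl p) a (.inl q) = δ1 p a q := rfl
@[simp] lemma mySumδ_rr {Q1 Q2 : Type} (δ1 : Q1 → A → Q1 → l) (δ2 : Q2 → A → Q2 → l)
    (p q : Q2) (a : A) : mySumδ δ1 δ2 (.inr p) a (.inr q) = δ2 p a q := rfl

lemma myVbaSumLang {Q1 Q2 : Type} (δ1 : Q1 → A → Q1 → l) (I1 F1 : Q1 → l)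
    (δ2 : Q2 → A → Q2 → l) (I2 F2 : Q2 → l) (w : ℕ → A) :
    vbaLang (mySumδ δ1 δ2) (Sum.elim I1 I2) (Sum.elim F1 F2) w =
      vbaLang δ1 I1 F1 w ⊔ vbaLang δ2 I2 F2 w := by
  apply le_antisymm
  · refine iSup₂_le fun q J => ?_
    by_cases hcross : ∃ i : ℕ, (q i).isLeft ≠ (q (i + 1)).isLeft
    · obtain ⟨i, hi⟩ := hcross
      refine le_trans (inf_le_left.trans inf_le_right) (le_trans (iInf_le _ i) ?_)
      have : mySumδ δ1 δ2 (q i) (w i) (q (i + 1)) = ⊥ := by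
        rcases hq : q i with p | p <;> rcases hq' : q (i + 1) with r | r <;>
          rw [hq, hq'] at hi <;> simp_all [mySumδ]
      rw [this]
      exact bot_le
    · push_neg at hcross
      have hconst : ∀ i : ℕ, (q i).isLeft = (q 0).isLeft := by
        intro i
        induction i with
        | zero => rfl
        | succ i ih => rw [← hcross i, ih]
      by_cases h0 : (q 0).isLeft = true
      · have hall : ∀ i, ∃ p, q i = Sum.inl p := by
          intro i
          rcases hqi : q i with p | p
          · exact ⟨p, rfl⟩
          · have := hconst i
            rw [hqi, h0] at this
            simp at this
        choose q1 hq1 using hall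
        refine le_sup_of_le_left ?_
        refine le_trans ?_ (le_iSup₂_of_le q1 J le_rfl)
        simp only [hq1, mySumδ_ll, Sum.elim_inl]
        exact le_rfl
      · have hall : ∀ i, ∃ p, q i = Sum.inr p := by
          intro i
          rcases hqi : q i with p | p
          · have := hconst i
            rw [hqi] at this
            simp at this
            exact absurd this h0
          · exact ⟨p, rfl⟩
        choose q2 hq2 using hall
        refine le_sup_of_le_right ?_
        refine le_trans ?_ (le_iSup₂_of_le q2 J le_rfl)
        simp only [hq2, mySumδ_rr, Sum.elim_inr]
        exact le_rfl
  · refine sup_le (iSup₂_le fun q J => ?_) (iSup₂_le fun q J => ?_)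
    · refine le_trans ?_ (le_iSup₂_of_le (fun i => Sum.inl (q i)) J le_rfl)
      simp only [mySumδ_ll, Sum.elim_inl]
      exact le_rfl
    · refine le_trans ?_ (le_iSup₂_of_le (fun i => Sum.inr (q i)) J le_rfl)
      simp only [mySumδ_rr, Sum.elim_inr]
      exact le_rfl

lemma myVbaRepSup {g1 g2 : (ℕ → A) → l} (h1 : VbaRep g1) (h2 : VbaRep g2) :
    VbaRep (fun w => g1 w ⊔ g2 w) := by
  obtain ⟨Q1, fQ1, δ1, I1, F1, hr1⟩ := h1
  obtain ⟨Q2, fQ2, δ2, I2, F2, hr2⟩ := h2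
  exact ⟨Q1 ⊕ Q2, inferInstance, mySumδ δ1 δ2, Sum.elim I1 I2, Sum.elim F1 F2,
    fun w => by simp only []; rw [myVbaSumLang, hr1, hr2]⟩

lemma myISupFinSucc {k : ℕ} (g : Fin (k + 1) → l) :
    (⨆ i : Fin (k + 1), g i) = g 0 ⊔ ⨆ i : Fin k, g i.succ := by
  apply le_antisymm
  · refine iSup_le ?_
    refine Fin.cases le_sup_left fun i => ?_
    exact le_sup_of_le_right (le_iSup (fun i : Fin k => g i.succ) i)
  · exact sup_le (le_iSup g 0) (iSup_le fun i => le_iSup g i.succ)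

lemma myVbaRepISup : ∀ {k : ℕ} (h : Fin k → (ℕ → A) → l),
    (∀ i, VbaRep (h i)) → VbaRep (fun w => ⨆ i, h i w) := by
  intro k
  induction k with
  | zero =>
    intro h _
    refine myVbaRepCongr (fun w => ?_) myVbaRepBot
    rw [iSup_of_empty]
  | succ k ih =>
    intro h hrep
    have := myVbaRepSup (hrep 0) (ih (fun i => h i.succ) fun i => hrep i.succ)
    refine myVbaRepCongr (fun w => ?_) this
    rw [myISupFinSucc (fun i => h i w)]

end Rep

/-- Over a finite distributive (complete) lattice and a finite alphabet, for
`f : (ℕ → A) → l` the following are equivalent: (1) `f` is the ω-language of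
some `l`-VBA; (2) every `a`-cut of `f` is ω-regular; (3) `f` is a finite join
of ω-regular languages weighted by lattice elements. -/
theorem stmt18 {l : Type} [CompleteLattice l] [Fintype l]
    (hd : ∀ x y z : l, x ⊓ (y ⊔ z) = (x ⊓ y) ⊔ (x ⊓ z))
    {A : Type} [Fintype A] (f : (ℕ → A) → l) :
    List.TFAE
      [∃ (Q : Type) (_ : Fintype Q) (δ : Q → A → Q → l) (I F : Q → l),
         ∀ w : ℕ → A, f w = vbaLang δ I F w,
       ∀ a : l, OmegaRegular {w : ℕ → A | a ≤ f w},
       ∃ (k : ℕ) (m : Fin k → l) (Ls : Fin k → Set (ℕ → A)),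
         (∀ i : Fin k, OmegaRegular (Ls i)) ∧
           ∀ w : ℕ → A, f w = ⨆ i : Fin k, ⨆ _ : w ∈ Ls i, m i] := by
  tfae_have 1 → 2 := by
    rintro ⟨Q, fQ, δ, I, F, hf⟩ a
    have hPfin : {p : l | SupPrime p ∧ p ≤ a}.Finite := Set.toFinite _
    have hcut : {w : ℕ → A | a ≤ f w} =
        ⋂ p ∈ hPfin.toFinset, {w : ℕ → A | p ≤ f w} := by
      ext w
      simp only [Set.mem_setOf_eq, Set.mem_iInter, Set.Finite.mem_toFinset]
      constructor
      · exact fun h p hp => hp.2.trans h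
      · intro h
        calc a = sSup {p : l | SupPrime p ∧ p ≤ a} := myDecomp hd a
          _ ≤ f w := sSup_le fun p hp => h p hp
    rw [hcut]
    apply myOmegaRegularBiInter
    intro p hp
    rw [Set.Finite.mem_toFinset] at hp
    have heq : {w : ℕ → A | p ≤ f w} = {w : ℕ → A | p ≤ vbaLang δ I F w} := by
      ext w; simp only [Set.mem_setOf_eq, hf]
    rw [heq, myPrimeCut hp.1]
    exact ⟨Q, fQ, _, _, _, rfl⟩
  tfae_have 2 → 3 := by
    intro h2
    refine ⟨Fintype.card l, fun i => (Fintype.equivFin l).symm i,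
      fun i => {w : ℕ → A | (Fintype.equivFin l).symm i ≤ f w},
      fun i => h2 _, fun w => ?_⟩
    apply le_antisymm
    · refine le_trans ?_ (le_iSup _ ((Fintype.equivFin l) (f w)))
      simp only [Equiv.symm_apply_apply, Set.mem_setOf_eq]
      exact le_iSup (fun _ : f w ≤ f w => f w) le_rfl
    · exact iSup₂_le fun i hi => hi
  tfae_have 3 → 1 := by
    rintro ⟨k, m, Ls, hreg, hf⟩
    have hrep : VbaRep (fun w : ℕ → A => ⨆ i : Fin k, ⨆ _ : w ∈ Ls i, m i) :=
      myVbaRepISup _ fun i => myVbaRepWeight (hreg i) (m i)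
    exact myVbaRepCongr (fun w => (hf w).symm) hrep
  tfae_finish
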